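/- Let n ≥ 4 be an integer and let K_n be the splitting field of f_{1,n}(X) over ℚ. Then K_n contains a square root of the following rational number d: if n = 4l then d = −2l; if n = 4l+1 then d = 2l+1; if n = 4l+2 then d = 2l+1; if n = 4l+3 then d = −2(l+1). That is, there exists x ∈ K_n with x² = d. -/

import Mathlib

open Polynomial

/-- `f1Q n = X^(n-1) + 2 X^(n-2) + ⋯ + (n-1) X + n = Σ_{k=1}^n k · X^(n-k)` over `ℚ`. -/
noncomputable def f1Q (n : ℕ) : Polynomial ℚ :=
  ∑ k ∈ Finset.Icc 1 n, C (k : ℚ) * X ^ (n - k)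

lemma f1Q_succ (n : ℕ) : f1Q (n + 1) = X * f1Q n + C ((n : ℚ) + 1) := by
  unfold f1Q
  rw [Finset.sum_Icc_succ_top (by omega : 1 ≤ n + 1), Finset.mul_sum]
  have h1 : ∀ k ∈ Finset.Icc 1 n, C (k : ℚ) * X ^ (n + 1 - k) = X * (C (k : ℚ) * X ^ (n - k)) := by
    intro k hk
    simp only [Finset.mem_Icc] at hk
    have : n + 1 - k = (n - k) + 1 := by omega
    rw [this, pow_succ]
    ring
  rw [Finset.sum_congr rfl h1]
  push_cast
  simp

lemma f1Q_key (n : ℕ) :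
    (X - 1) ^ 2 * f1Q n = X ^ (n + 1) - C ((n : ℚ) + 1) * X + C (n : ℚ) := by
  induction n with
  | zero =>
    simp [f1Q]
  | succ n ih =>
    rw [f1Q_succ]
    push_cast
    simp only [C_add, C_1] at ih ⊢
    linear_combination (X : ℚ[X]) * ih

lemma f1Q_eval_zero (n : ℕ) (hn : 1 ≤ n) : (f1Q n).eval 0 = n := by
  obtain ⟨m, rfl⟩ : ∃ m, n = m + 1 := ⟨n - 1, by omega⟩
  rw [f1Q_succ]
  simp

lemma f1Q_eval_one (n : ℕ) : (f1Q n).eval 1 * 2 = n * (n + 1) := by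
  induction n with
  | zero => simp [f1Q]
  | succ n ih =>
    rw [f1Q_succ]
    push_cast
    simp only [eval_add, eval_mul, eval_X, eval_C, one_mul]
    push_cast at ih ⊢
    nlinarith [ih]

lemma xsub1_monic : ((X - 1 : ℚ[X]) ^ 2).Monic := by
  have h : (X - 1 : ℚ[X]) = X - C 1 := by simp
  rw [h]
  exact (monic_X_sub_C 1).pow 2

lemma f1Q_rhs_natDegree (n : ℕ) (hn : 1 ≤ n) :
    (X ^ (n + 1) - C ((n : ℚ) + 1) * X + C (n : ℚ)).natDegree = n + 1 := by
  compute_degree!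
  · rw [if_neg (by omega)]; decide
  all_goals omega

lemma f1Q_rhs_monic (n : ℕ) (hn : 1 ≤ n) :
    (X ^ (n + 1) - C ((n : ℚ) + 1) * X + C (n : ℚ)).Monic := by
  monicity!
  all_goals first
    | omega
    | (rw [if_neg (by omega)]; decide)

lemma f1Q_monic (n : ℕ) (hn : 1 ≤ n) : (f1Q n).Monic := by
  have hM : ((X - 1) ^ 2 * f1Q n).Monic := by
    rw [f1Q_key]; exact f1Q_rhs_monic n hn
  exact xsub1_monic.of_mul_monic_left hM

lemma f1Q_natDegree (n : ℕ) (hn : 1 ≤ n) : (f1Q n).natDegree = n - 1 := by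
  have h2 : ((X - 1 : ℚ[X]) ^ 2).natDegree = 2 := by
    have h : (X - 1 : ℚ[X]) = X - C 1 := by simp
    rw [h, natDegree_pow, natDegree_X_sub_C]
  have hne : f1Q n ≠ 0 := (f1Q_monic n hn).ne_zero
  have this := natDegree_mul xsub1_monic.ne_zero hne
  rw [f1Q_key, h2, f1Q_rhs_natDegree n hn] at this
  omega



lemma eval_deriv_prod {K : Type*} [Field K] {m : ℕ} (e : Fin m → K) (i : Fin m) :
    eval (e i) (derivative (∏ j, (X - C (e j)))) =
      ∏ j ∈ Finset.univ.erase i, (e i - e j) := by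
  classical
  have hd : derivative (∏ j, (X - C (e j)))
      = ∑ j, (∏ k ∈ Finset.univ.erase j, (X - C (e k))) * derivative (X - C (e j)) := by
    rw [Finset.prod_eq_multiset_prod, derivative_prod]
    rw [Finset.sum_eq_multiset_sum]
    rfl
  rw [hd]
  simp only [derivative_X_sub_C, mul_one, eval_finset_sum, eval_prod, eval_sub, eval_X, eval_C]
  rw [Finset.sum_eq_single i]
  · intro j _ hj
    apply Finset.prod_eq_zero (i := i)
    · exact Finset.mem_erase.mpr ⟨hj.symm, Finset.mem_univ i⟩
    · exact sub_self (e i)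
  · intro h; exact absurd (Finset.mem_univ i) h

lemma pairing {K : Type*} [Field K] {m : ℕ} (e : Fin m → K) :
    ∃ (Δ : K) (N : ℕ), 2 * N = m * (m - 1) ∧
      ∏ i, ∏ j ∈ Finset.univ.erase i, (e i - e j) = (-1) ^ N * Δ ^ 2 := by
  classical
  set T : Fin m → Finset (Fin m) := fun i => Finset.univ.filter (fun j => i < j) with hT
  set S : Fin m → Finset (Fin m) := fun i => Finset.univ.filter (fun j => j < i) with hS
  have hsplit : ∀ (f : Fin m → Fin m → K) i,
      ∏ j ∈ Finset.univ.erase i, f i j = (∏ j ∈ T i, f i j) * ∏ j ∈ S i, f i j := by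
    intro f i
    have hun : Finset.univ.erase i = T i ∪ S i := by
      ext j
      simp only [Finset.mem_erase, Finset.mem_union, Finset.mem_filter, Finset.mem_univ,
        true_and, and_true, hT, hS]
      constructor
      · intro h; exact (Ne.symm h).lt_or_gt
      · rintro (h | h)
        exacts [h.ne', h.ne]
    have hdisj : Disjoint (T i) (S i) := by
      rw [Finset.disjoint_left]
      intro j hj1 hj2
      simp only [hT, hS, Finset.mem_filter] at hj1 hj2
      exact absurd hj2.2 (not_lt.mpr hj1.2.le)
    rw [hun, Finset.prod_union hdisj]
  have hcomm : ∏ i, ∏ j ∈ S i, (e i - e j) = ∏ i, ∏ j ∈ T i, (e j - e i) := by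
    apply Finset.prod_comm' (t' := Finset.univ) (s' := fun y => T y)
    intro x y
    simp [hT, hS]
  have hcommcard : ∑ i, (S i).card = ∑ i, (T i).card := by
    simp only [Finset.card_eq_sum_ones]
    apply Finset.sum_comm' (t' := Finset.univ) (s' := fun y => T y)
    intro x y
    simp [hT, hS]
  have hsign : ∀ i, ∏ j ∈ T i, (e j - e i) = (-1) ^ (T i).card * ∏ j ∈ T i, (e i - e j) := by
    intro i
    rw [← Finset.prod_const, ← Finset.prod_mul_distrib]
    exact Finset.prod_congr rfl fun j _ => by ring
  refine ⟨∏ i, ∏ j ∈ T i, (e i - e j), ∑ i, (T i).card, ?_, ?_⟩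
  · have hcard : ∀ i : Fin m, (Finset.univ.erase i).card = (T i).card + (S i).card := by
      intro i
      have hun : Finset.univ.erase i = T i ∪ S i := by
        ext j
        simp only [Finset.mem_erase, Finset.mem_union, Finset.mem_filter, Finset.mem_univ,
          true_and, and_true, hT, hS]
        constructor
        · intro h; exact (Ne.symm h).lt_or_gt
        · rintro (h | h)
          exacts [h.ne', h.ne]
      have hdisj : Disjoint (T i) (S i) := by
        rw [Finset.disjoint_left]
        intro j hj1 hj2
        simp only [hT, hS, Finset.mem_filter] at hj1 hj2
        exact absurd hj2.2 (not_lt.mpr hj1.2.le)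
      rw [hun, Finset.card_union_of_disjoint hdisj]
    have h1 : ∑ i : Fin m, (Finset.univ.erase i).card = m * (m - 1) := by
      simp [Finset.card_erase_of_mem, Finset.card_univ]
    rw [Finset.sum_congr rfl (fun i _ => hcard i), Finset.sum_add_distrib, hcommcard] at h1
    omega
  · calc ∏ i, ∏ j ∈ Finset.univ.erase i, (e i - e j)
        = ∏ i, ((∏ j ∈ T i, (e i - e j)) * ∏ j ∈ S i, (e i - e j)) :=
          Finset.prod_congr rfl fun i _ => hsplit (fun i j => e i - e j) i
      _ = (∏ i, ∏ j ∈ T i, (e i - e j)) * ∏ i, ∏ j ∈ S i, (e i - e j) :=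
          Finset.prod_mul_distrib
      _ = (∏ i, ∏ j ∈ T i, (e i - e j)) *
            ∏ i, ((-1) ^ (T i).card * ∏ j ∈ T i, (e i - e j)) := by
          rw [hcomm]; exact congrArg _ (Finset.prod_congr rfl fun i _ => hsign i)
      _ = (-1) ^ (∑ i, (T i).card) * (∏ i, ∏ j ∈ T i, (e i - e j)) ^ 2 := by
          rw [Finset.prod_mul_distrib, Finset.prod_pow_eq_pow_sum]
          ring

lemma core (n : ℕ) (hn : 4 ≤ n) :
    ∃ (Δ : (f1Q n).SplittingField) (N : ℕ),
      2 * N = (n - 1) * (n - 2) ∧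
      algebraMap ℚ (f1Q n).SplittingField ((n : ℚ) ^ 2 * ((n : ℚ) + 1) / 2) *
          ((-1) ^ N * Δ ^ 2)
        = algebraMap ℚ (f1Q n).SplittingField (((n : ℚ) * ((n : ℚ) + 1)) ^ (n - 1)) := by
  classical
  set K := (f1Q n).SplittingField with hK
  set φ := algebraMap ℚ K with hφ
  set F := (f1Q n).map φ with hF
  have h1n : 1 ≤ n := by omega
  have hFM : F.Monic := (f1Q_monic n h1n).map φ
  have hdegF : F.natDegree = n - 1 := by
    rw [hF, natDegree_map, f1Q_natDegree n h1n]
  have hsplits : F.Splits :=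
    SplittingField.splits (f1Q n)
  have hcard : F.roots.card = n - 1 := by
    rw [splits_iff_card_roots.mp hsplits, hdegF]
  -- the list of roots
  set L := F.roots.toList with hLdef
  have hlen : L.length = n - 1 := by
    rw [hLdef, Multiset.length_toList, hcard]
  set e : Fin L.length → K := L.get with he
  have hFe : F = ∏ i, (X - C (e i)) := by
    have h := hsplits.eq_prod_roots_of_monic hFM
    rw [h, ← Multiset.coe_toList F.roots, ← hLdef, Multiset.map_coe, Multiset.prod_coe]
    conv_lhs => rw [← List.ofFn_get L]
    rw [List.map_ofFn, List.prod_ofFn]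
    rfl
  -- evaluations of f1Q n
  have heval1 : (f1Q n).eval 1 = (n : ℚ) * ((n : ℚ) + 1) / 2 := by
    have := f1Q_eval_one n
    field_simp
    linarith
  have hF0 : F.eval 0 = φ ((n : ℚ)) := by
    rw [hF, Polynomial.eval_zero_map, f1Q_eval_zero n h1n]
  have hF1 : F.eval 1 = φ ((n : ℚ) * ((n : ℚ) + 1) / 2) := by
    rw [hF, Polynomial.eval_one_map, heval1]
  have hφinj : Function.Injective φ := φ.injective
  have hn0 : ((n : ℚ)) ≠ 0 := by positivity
  have hn1 : ((n : ℚ) * ((n : ℚ) + 1) / 2) ≠ 0 := by positivity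
  -- mapped key identity
  have hKey : (X - 1) ^ 2 * F = X ^ (n + 1) - C ((n : K) + 1) * X + C (n : K) := by
    have := congrArg (Polynomial.map φ) (f1Q_key n)
    simpa [Polynomial.map_mul, Polynomial.map_pow, Polynomial.map_sub, Polynomial.map_add,
      Polynomial.map_one, map_C, map_X, map_natCast, C_eq_natCast] using this
  -- each root is a root
  have hroot : ∀ i, F.eval (e i) = 0 := by
    intro i
    rw [hFe, eval_prod]
    apply Finset.prod_eq_zero (Finset.mem_univ i)
    simp
  -- roots are not 0 or 1
  have hne1 : ∀ i, e i ≠ 1 := by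
    intro i h
    have := hroot i
    rw [h, hF1] at this
    exact hn1 (hφinj (by simpa using this))
  have hne0 : ∀ i, e i ≠ 0 := by
    intro i h
    have := hroot i
    rw [h, hF0] at this
    exact hn0 (hφinj (by simpa using this))
  -- the key equation for each root
  have hDi : ∀ i, e i * (e i - 1) * (derivative F).eval (e i) = (n : K) * ((n : K) + 1) := by
    intro i
    set r := e i with hr
    have hri : F.eval r = 0 := hroot i
    have hgr : r ^ (n + 1) - ((n : K) + 1) * r + (n : K) = 0 := by
      have := congrArg (eval r) hKey
      simp only [eval_mul, eval_pow, eval_sub, eval_add, eval_one, eval_X, eval_C,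
        hri, mul_zero] at this
      linear_combination -this
    have hg'r : (r - 1) ^ 2 * (derivative F).eval r = ((n : K) + 1) * r ^ n - ((n : K) + 1) := by
      have := congrArg (fun p => eval r (derivative p)) hKey
      simp only [derivative_mul, derivative_pow, derivative_sub, derivative_add, derivative_one,
        derivative_X, derivative_C, derivative_X_pow, eval_add, eval_sub, eval_mul, eval_pow,
        eval_X, eval_C, eval_one, eval_natCast, eval_zero, pow_one, mul_zero, zero_mul,
        add_zero, zero_add, mul_one, sub_zero, hri] at this
      push_cast at this
      simp only [eval_mul, eval_C, eval_pow, eval_X] at this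
      linear_combination this
    have hr1 : r - 1 ≠ 0 := sub_ne_zero.mpr (hne1 i)
    apply mul_left_cancel₀ hr1
    linear_combination r * hg'r + ((n : K) + 1) * hgr
  -- products
  have hprodD : (∏ i, (e i * (e i - 1))) * ∏ i, (derivative F).eval (e i)
      = ((n : K) * ((n : K) + 1)) ^ (n - 1) := by
    rw [← Finset.prod_mul_distrib]
    rw [Finset.prod_congr rfl fun i _ => hDi i, Finset.prod_const]
    congr 1
    simp [Finset.card_univ, hlen]
  have hprod01 : ∏ i, (e i * (e i - 1)) = (n : K) * ((n : K) * ((n : K) + 1) / 2) := by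
    have h0 : ∏ i, (0 - e i) = (n : K) := by
      have := hF0
      rw [hFe, eval_prod] at this
      simpa using this
    have h1 : ∏ i, (1 - e i) = (n : K) * ((n : K) + 1) / 2 := by
      have := hF1
      rw [hFe, eval_prod] at this
      simp only [eval_sub, eval_X, eval_C, eval_one] at this
      rw [this, eq_ratCast]
      push_cast
      ring
    calc ∏ i, (e i * (e i - 1)) = ∏ i, ((0 - e i) * (1 - e i)) :=
          Finset.prod_congr rfl fun i _ => by ring
      _ = (∏ i, (0 - e i)) * ∏ i, (1 - e i) := Finset.prod_mul_distrib
      _ = (n : K) * ((n : K) * ((n : K) + 1) / 2) := by rw [h0, h1]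
  -- derivative evaluations as products over erased sets
  have hDprod : ∀ i, (derivative F).eval (e i) = ∏ j ∈ Finset.univ.erase i, (e i - e j) := by
    intro i
    rw [hFe]
    exact eval_deriv_prod e i
  -- pairing
  obtain ⟨Δ, N, h2N, hΔ⟩ := pairing e
  refine ⟨Δ, N, ?_, ?_⟩
  · have h11 : n - 1 - 1 = n - 2 := by omega
    rw [h2N, hlen, h11]
  · have hA : ∏ i, (derivative F).eval (e i) = (-1) ^ N * Δ ^ 2 := by
      rw [Finset.prod_congr rfl fun i _ => hDprod i, hΔ]
    have hmain : (n : K) * ((n : K) * ((n : K) + 1) / 2) * ((-1) ^ N * Δ ^ 2)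
        = ((n : K) * ((n : K) + 1)) ^ (n - 1) := by
      rw [← hA, ← hprod01, hprodD]
    have hq : φ ((n : ℚ) ^ 2 * ((n : ℚ) + 1) / 2) = (n : K) * ((n : K) * ((n : K) + 1) / 2) := by
      rw [eq_ratCast]
      push_cast
      ring
    have hR : φ (((n : ℚ) * ((n : ℚ) + 1)) ^ (n - 1)) = ((n : K) * ((n : K) + 1)) ^ (n - 1) := by
      rw [eq_ratCast]
      push_cast
      ring
    rw [hq, hR]
    exact hmain


lemma exists_sqrt {K : Type*} [Field K] (φ : ℚ →+* K) (Δ : K) (q R d c : ℚ)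
    (hq : q ≠ 0) (hc : c ≠ 0) (hK : φ q * Δ ^ 2 = φ R) (hR : R = q * (d * c ^ 2)) :
    ∃ x : K, x ^ 2 = φ d := by
  refine ⟨Δ / φ c, ?_⟩
  have hφq : φ q ≠ 0 := fun h => hq (φ.injective (by rw [h, map_zero]))
  have hφc : φ c ≠ 0 := fun h => hc (φ.injective (by rw [h, map_zero]))
  have hΔ2 : Δ ^ 2 = φ d * φ c ^ 2 := by
    apply mul_left_cancel₀ hφq
    rw [hK, hR, map_mul, map_mul, map_pow]
  rw [div_pow, hΔ2, mul_div_assoc, div_self (pow_ne_zero 2 hφc), mul_one]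

lemma case_step {K : Type*} [Field K] (φ : ℚ →+* K) (Δ : K) (N n m : ℕ) (d c : ℚ)
    (hn0 : 1 ≤ n) (hc : c ≠ 0)
    (hcore : φ ((n : ℚ) ^ 2 * ((n : ℚ) + 1) / 2) * ((-1) ^ N * Δ ^ 2)
      = φ (((n : ℚ) * ((n : ℚ) + 1)) ^ m))
    (hsign : (-1 : ℚ) ^ N * ((n : ℚ) * ((n : ℚ) + 1)) ^ m
      = (n : ℚ) ^ 2 * ((n : ℚ) + 1) / 2 * (d * c ^ 2)) :
    ∃ x : K, x ^ 2 = φ d := by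
  have hq : ((n : ℚ) ^ 2 * ((n : ℚ) + 1) / 2) ≠ 0 := by
    have : (1 : ℚ) ≤ (n : ℚ) := by exact_mod_cast hn0
    positivity
  have h2 : (-1 : K) ^ N * (-1 : K) ^ N = 1 := by
    rw [← pow_add, ← two_mul, pow_mul, neg_one_sq, one_pow]
  have hK' : φ ((n : ℚ) ^ 2 * ((n : ℚ) + 1) / 2) * Δ ^ 2
      = φ ((-1 : ℚ) ^ N * ((n : ℚ) * ((n : ℚ) + 1)) ^ m) := by
    rw [map_mul, map_pow, map_neg, map_one]
    linear_combination ((-1 : K) ^ N) * hcore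
      - (φ ((n : ℚ) ^ 2 * ((n : ℚ) + 1) / 2) * Δ ^ 2) * h2
  exact exists_sqrt φ Δ _ _ d c hq hc hK' hsign

/-- For `n ≥ 4`, the splitting field `K_n` of `f1Q n` over `ℚ` contains a square root of
`−2l` if `n = 4l`, of `2l+1` if `n = 4l+1` or `n = 4l+2`, and of `−2(l+1)` if `n = 4l+3`. -/
theorem stmt9 (n : ℕ) (hn : 4 ≤ n) :
    (∀ l : ℕ, n = 4 * l →
      ∃ x : (f1Q n).SplittingField, x ^ 2 = algebraMap ℚ (f1Q n).SplittingField (-2 * l)) ∧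
    (∀ l : ℕ, n = 4 * l + 1 →
      ∃ x : (f1Q n).SplittingField, x ^ 2 = algebraMap ℚ (f1Q n).SplittingField (2 * l + 1)) ∧
    (∀ l : ℕ, n = 4 * l + 2 →
      ∃ x : (f1Q n).SplittingField, x ^ 2 = algebraMap ℚ (f1Q n).SplittingField (2 * l + 1)) ∧
    (∀ l : ℕ, n = 4 * l + 3 →
      ∃ x : (f1Q n).SplittingField, x ^ 2 = algebraMap ℚ (f1Q n).SplittingField (-2 * (l + 1))) := by
  obtain ⟨Δ, N, h2N, hcore⟩ := core n hn
  refine ⟨?_, ?_, ?_, ?_⟩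
  · -- n = 4l, d = -2l
    intro l hl
    obtain ⟨l', rfl⟩ : ∃ l'', l = l'' + 1 := ⟨l - 1, by omega⟩
    subst hl
    have hn1 : 4 * (l' + 1) - 1 = 4 * l' + 3 := by omega
    have hn2 : 4 * (l' + 1) - 2 = 4 * l' + 2 := by omega
    have hNval : N = (4 * l' + 3) * (2 * l' + 1) := by
      have h : 2 * N = 2 * ((4 * l' + 3) * (2 * l' + 1)) := by rw [h2N, hn1, hn2]; ring
      exact Nat.eq_of_mul_eq_mul_left two_pos h
    have hNodd : Odd N := by
      rw [hNval]; exact Odd.mul ⟨2 * l' + 1, by ring⟩ ⟨l', by ring⟩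
    refine case_step _ Δ N (4 * (l' + 1)) (4 * (l' + 1) - 1) _
      (2 * (4 * (l' : ℚ) + 4) ^ (2 * l') * (4 * (l' : ℚ) + 5) ^ (2 * l' + 1))
      (by omega) (by positivity) hcore ?_
    rw [hn1, hNodd.neg_one_pow, mul_pow]
    push_cast
    ring
  · -- n = 4l+1, d = 2l+1
    intro l hl
    obtain ⟨l', rfl⟩ : ∃ l'', l = l'' + 1 := ⟨l - 1, by omega⟩
    subst hl
    have hn1 : 4 * (l' + 1) + 1 - 1 = 4 * l' + 4 := by omega
    have hn2 : 4 * (l' + 1) + 1 - 2 = 4 * l' + 3 := by omega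
    have hNval : N = (2 * l' + 2) * (4 * l' + 3) := by
      have h : 2 * N = 2 * ((2 * l' + 2) * (4 * l' + 3)) := by rw [h2N, hn1, hn2]; ring
      exact Nat.eq_of_mul_eq_mul_left two_pos h
    have hNeven : Even N := by
      rw [hNval]; exact (Even.mul_right ⟨l' + 1, by ring⟩ _)
    refine case_step _ Δ N (4 * (l' + 1) + 1) (4 * (l' + 1) + 1 - 1) _
      (2 * (4 * (l' : ℚ) + 5) ^ (2 * l' + 1) * (4 * (l' : ℚ) + 6) ^ (2 * l' + 1))
      (by omega) (by positivity) hcore ?_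
    rw [hn1, hNeven.neg_one_pow, mul_pow]
    push_cast
    ring
  · -- n = 4l+2, d = 2l+1
    intro l hl
    obtain ⟨l', rfl⟩ : ∃ l'', l = l'' + 1 := ⟨l - 1, by omega⟩
    subst hl
    have hn1 : 4 * (l' + 1) + 2 - 1 = 4 * l' + 5 := by omega
    have hn2 : 4 * (l' + 1) + 2 - 2 = 4 * l' + 4 := by omega
    have hNval : N = (4 * l' + 5) * (2 * l' + 2) := by
      have h : 2 * N = 2 * ((4 * l' + 5) * (2 * l' + 2)) := by rw [h2N, hn1, hn2]; ring
      exact Nat.eq_of_mul_eq_mul_left two_pos h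
    have hNeven : Even N := by
      rw [hNval]; exact (Even.mul_left ⟨l' + 1, by ring⟩ _)
    refine case_step _ Δ N (4 * (l' + 1) + 2) (4 * (l' + 1) + 2 - 1) _
      (2 * (4 * (l' : ℚ) + 6) ^ (2 * l' + 1) * (4 * (l' : ℚ) + 7) ^ (2 * l' + 2))
      (by omega) (by positivity) hcore ?_
    rw [hn1, hNeven.neg_one_pow, mul_pow]
    push_cast
    ring
  · -- n = 4l+3, d = -2(l+1)
    intro l hl
    subst hl
    have hn1 : 4 * l + 3 - 1 = 4 * l + 2 := by omega
    have hn2 : 4 * l + 3 - 2 = 4 * l + 1 := by omega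
    have hNval : N = (2 * l + 1) * (4 * l + 1) := by
      have h : 2 * N = 2 * ((2 * l + 1) * (4 * l + 1)) := by rw [h2N, hn1, hn2]; ring
      exact Nat.eq_of_mul_eq_mul_left two_pos h
    have hNodd : Odd N := by
      rw [hNval]; exact Odd.mul ⟨l, by ring⟩ ⟨2 * l, by ring⟩
    refine case_step _ Δ N (4 * l + 3) (4 * l + 3 - 1) _
      (2 * (4 * (l : ℚ) + 3) ^ (2 * l) * (4 * (l : ℚ) + 4) ^ (2 * l))
      (by omega) (by positivity) hcore ?_
    rw [hn1, hNodd.neg_one_pow, mul_pow]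
    push_cast
    ring
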